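/- Let K ≥ 2, y ∈ {1,…,K}, and let v_1,…,v_K be vectors of the Euclidean space ℝ^m each of which has all coordinates nonnegative, and let ε ∈ ℝ^m satisfy ⟨ε, v_k⟩ = 0 for every k; set x = Σ_{k=1}^K v_k + ε. If class y dominates the representation, i.e. ‖Σ_{k≠y} v_k‖ < ‖v_y‖, then class y also positively dominates it, i.e. ‖v_y‖ ≤ ‖Σ_{j≠k} v_j‖ for every k ≠ y, and consequently ‖x − v_y‖ < ‖x − v_k‖ for every k ≠ y, so the sparse representation classifier assigns x its correct label y. -/

import Mathlib

open Finset RealInnerProductSpace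

lemma inner_nonneg_of_entrywise {m : ℕ} (a b : EuclideanSpace ℝ (Fin m))
    (ha : ∀ i, 0 ≤ a i) (hb : ∀ i, 0 ≤ b i) : (0:ℝ) ≤ ⟪a, b⟫ := by
  rw [PiLp.inner_apply]
  exact Finset.sum_nonneg fun i _ => mul_nonneg (hb i) (ha i)

lemma norm_le_norm_add_of_entrywise {m : ℕ} (a b : EuclideanSpace ℝ (Fin m))
    (ha : ∀ i, 0 ≤ a i) (hb : ∀ i, 0 ≤ b i) : ‖a‖ ≤ ‖a + b‖ := by
  have h : ‖a‖^2 ≤ ‖a + b‖^2 := by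
    rw [norm_add_sq_real]
    nlinarith [inner_nonneg_of_entrywise a b ha hb, sq_nonneg ‖b‖]
  exact (pow_le_pow_left₀ (norm_nonneg a) le_rfl 2 |> fun _ => by
    nlinarith [norm_nonneg a, norm_nonneg (a+b)])

theorem src_nonneg_dominance_implies_correct
    (m K : ℕ) (hK : 2 ≤ K) (y : Fin K)
    (v : Fin K → EuclideanSpace ℝ (Fin m))
    (hnn : ∀ k, ∀ i, 0 ≤ v k i)
    (ε : EuclideanSpace ℝ (Fin m)) (horth : ∀ k, ⟪ε, v k⟫ = 0)
    (x : EuclideanSpace ℝ (Fin m)) (hx : x = ∑ k, v k + ε)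
    (hdom : ‖∑ k ∈ univ.erase y, v k‖ < ‖v y‖) :
    (∀ k, k ≠ y → ‖v y‖ ≤ ‖∑ j ∈ univ.erase k, v j‖) ∧
      ∀ k, k ≠ y → ‖x - v y‖ < ‖x - v k‖ := by
  have hsumnn : ∀ (s : Finset (Fin K)) (i : Fin m), 0 ≤ (∑ j ∈ s, v j) i := by
    intro s i
    have : (∑ j ∈ s, v j) i = ∑ j ∈ s, v j i := by
      rw [WithLp.ofLp_sum]
      exact Finset.sum_apply i s _
    rw [this]
    exact Finset.sum_nonneg fun j _ => hnn j i
  have hpos : ∀ k, k ≠ y → ‖v y‖ ≤ ‖∑ j ∈ univ.erase k, v j‖ := by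
    intro k hk
    have hy : y ∈ univ.erase k := Finset.mem_erase.2 ⟨(Ne.symm hk), Finset.mem_univ y⟩
    have hsplit : ∑ j ∈ univ.erase k, v j = v y + ∑ j ∈ (univ.erase k).erase y, v j :=
      (Finset.add_sum_erase _ v hy).symm
    rw [hsplit]
    exact norm_le_norm_add_of_entrywise _ _ (hnn y) (hsumnn _)
  refine ⟨hpos, fun k hk => ?_⟩
  -- x - v j = ∑ over erase j + ε
  have hsplit : ∀ j : Fin K, x - v j = (∑ i ∈ univ.erase j, v i) + ε := by
    intro j
    rw [hx, ← Finset.add_sum_erase _ v (Finset.mem_univ j)]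
    abel
  have hortho : ∀ (s : Finset (Fin K)), ⟪ε, ∑ j ∈ s, v j⟫ = (0:ℝ) := by
    intro s
    rw [inner_sum]
    exact Finset.sum_eq_zero fun j _ => horth j
  have hnorm : ∀ j : Fin K, ‖x - v j‖^2 = ‖∑ i ∈ univ.erase j, v i‖^2 + ‖ε‖^2 := by
    intro j
    rw [hsplit j, norm_add_sq_real, real_inner_comm, hortho]
    ring
  have hlt : ‖∑ i ∈ univ.erase y, v i‖ < ‖∑ i ∈ univ.erase k, v i‖ :=
    lt_of_lt_of_le hdom (hpos k hk)
  have h2 : ‖x - v y‖^2 < ‖x - v k‖^2 := by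
    rw [hnorm y, hnorm k]
    have := norm_nonneg (∑ i ∈ univ.erase y, v i)
    nlinarith
  exact lt_of_pow_lt_pow_left₀ 2 (norm_nonneg _) h2
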